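/- Let A ∈ 𝒫_π be a canonical plane matrix of type π with parameters λ_{j,i}, and for i ∈ {1,...,m_1} let V_i = ℂ[A]·e_i be the A-cyclic subspace of ℂ^n generated by the standard basis vector e_i. Then for every j ∈ {1,...,t} and every i ∈ P_j = {m_1 − m_j + 1, ..., m_1 − m_{j+1}}, the restriction of A to the A-invariant subspace V_i is similar to the s_j × s_j matrix G_j; equivalently, V_i has a basis consisting of standard basis vectors with respect to which the restriction of A is represented by G_j. -/

import Mathlib

/- Common setup: canonical plane matrices (P. Daugulis, "A parametrization of
matrix conjugacy orbit sets as unions of affine planes"). -/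

open Matrix Polynomial

noncomputable section

/-- `ℕ`-indexed entries of the generalized companion matrix `R_l(y₁,...,y_l)`:
subdiagonal entries `1`, last column given (via Vieta) by the coefficients of
`∏ (X - yᵢ)` (entry in row `k` of the last column is
`(−1)^{l+1−k}·e_{l+1−k}(y)`), all other entries `0`. -/
def genCompE (l : ℕ) (y : Fin l → ℂ) (i j : ℕ) : ℂ :=
  if i < l ∧ j < l then
    (if i = j + 1 then 1
     else if j = l - 1 then -((∏ k, (X - C (y k))).coeff i)
     else 0)
  else 0

/-- The generalized companion matrix `R_l(y₁,...,y_l)`, i.e. the companion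
matrix of `∏ (X - yᵢ)`. -/
def genComp (l : ℕ) (y : Fin l → ℂ) : Matrix (Fin l) (Fin l) ℂ :=
  Matrix.of fun i j => genCompE l y i j

/-- A partition of `n`, recorded by its stacks: `t` stacks, with strictly
decreasing positive distinct values `m 0 > m 1 > ... > m (t-1)` and positive
lengths `l j`, so that the partition consists of `l j` copies of `m j` and
`n = ∑ j, l j * m j`. -/
structure StackPartition (n : ℕ) where
  t : ℕ
  m : Fin t → ℕ
  l : Fin t → ℕ
  m_pos : ∀ j, 0 < m j
  l_pos : ∀ j, 0 < l j
  m_strictAnti : ∀ i j : Fin t, i < j → m j < m i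
  sum_eq : (∑ j, l j * m j) = n

namespace StackPartition

variable {n : ℕ} (P : StackPartition n)

/-- `m j` extended by `0` beyond the number of stacks (`0`-indexed), so
`mE 0 = m_1` and `mE t = m_{t+1} = 0` in the paper's notation. -/
def mE (j : ℕ) : ℕ := if h : j < P.t then P.m ⟨j, h⟩ else 0

/-- Row/column offset of the `j`-th diagonal block (`0`-indexed):
`S j = ∑_{i<j} l i * m i`. -/
def S (j : ℕ) : ℕ := ∑ i : Fin P.t, if (i : ℕ) < j then P.l i * P.m i else 0

/-- `sE j = ∑_{i<j} l i`; the paper's `s_j` (for `1`-indexed `j`) is `sE j`. -/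
def sE (j : ℕ) : ℕ := ∑ i : Fin P.t, if (i : ℕ) < j then P.l i else 0

/-- The multiset of addends of the partition. -/
def parts : Multiset ℕ := ∑ j : Fin P.t, Multiset.replicate (P.l j) (P.m j)

/-- Offsets for the direct sum `⊕_j (m_j - m_{j+1}) G_j`. -/
def T (k : ℕ) : ℕ :=
  ∑ i : Fin P.t, if (i : ℕ) < k then (P.m i - P.mE ((i : ℕ) + 1)) * P.sE ((i : ℕ) + 1) else 0

end StackPartition

/-- Parameters `λ_{j,1},...,λ_{j,l_j}` for each stack `j`. -/
def Params {n : ℕ} (P : StackPartition n) := (j : Fin P.t) → Fin (P.l j) → ℂ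

/-- `ℕ`-indexed entry of the canonical plane matrix of type `P` with
parameters `lam`: the `j`-th diagonal block (of size `l j * m j`, occupying
rows and columns `[S j, S (j+1))`) is `R_{l j}(lam j) ⊗ E_{m j}` (row index
`a` of the block encodes the pair `(a / m j, a % m j)`), the block directly
below it occupies the first `m (j+1)` rows of block `j+1` and the last `m j`
columns of block `j` and equals `[O | E_{m (j+1)}]`, and all other entries
vanish. -/
def cpmEntry {n : ℕ} (P : StackPartition n) (lam : Params P) (r c : ℕ) : ℂ :=
  (∑ j : Fin P.t,
    if P.S j ≤ r ∧ r < P.S ((j : ℕ) + 1) ∧ P.S j ≤ c ∧ c < P.S ((j : ℕ) + 1)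
        ∧ (r - P.S j) % P.m j = (c - P.S j) % P.m j then
      genCompE (P.l j) (lam j) ((r - P.S j) / P.m j) ((c - P.S j) / P.m j)
    else 0)
  +
  (∑ j : Fin P.t,
    if P.S ((j : ℕ) + 1) ≤ r ∧ r < P.S ((j : ℕ) + 1) + P.mE ((j : ℕ) + 1)
        ∧ P.S ((j : ℕ) + 1) - P.m j ≤ c ∧ c < P.S ((j : ℕ) + 1)
        ∧ c - (P.S ((j : ℕ) + 1) - P.m j)
            = (P.m j - P.mE ((j : ℕ) + 1)) + (r - P.S ((j : ℕ) + 1)) then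
      (1 : ℂ)
    else 0)

/-- The canonical plane matrix of type `P` with parameters `lam`. -/
def cpm {n : ℕ} (P : StackPartition n) (lam : Params P) : Matrix (Fin n) (Fin n) ℂ :=
  Matrix.of fun r c => cpmEntry P lam r c

/-- The set `𝒫_π` of canonical plane matrices of type `P`. -/
def planeSet {n : ℕ} (P : StackPartition n) : Set (Matrix (Fin n) (Fin n) ℂ) :=
  { A | ∃ lam : Params P, A = cpm P lam }

/-- Similarity (conjugacy) of square complex matrices. -/
def MatrixSimilar {n : ℕ} (A B : Matrix (Fin n) (Fin n) ℂ) : Prop :=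
  ∃ Q : Matrix (Fin n) (Fin n) ℂ, IsUnit Q.det ∧ A * Q = Q * B

/-- The `A`-cyclic subspace `ℂ[A]·v`, spanned by `v, Av, A²v, ...`. -/
def cyclicSpan {n : ℕ} (A : Matrix (Fin n) (Fin n) ℂ) (v : Fin n → ℂ) :
    Submodule ℂ (Fin n → ℂ) :=
  Submodule.span ℂ (Set.range fun k : ℕ => (A ^ k) *ᵥ v)

/-- `ℕ`-indexed entry of the matrix
`G_j = ⊕_{i≤j} C(a_{i,0},...,a_{i,l_i−1}) + Σ_{i<j} E_{s_i+1,s_i}`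
(`0`-indexed `j`; the `i`-th diagonal block is the companion matrix of
`∏_k (X - λ_{i,k})`, and the matrix units sit just below the lower-left
corners of the diagonal blocks). -/
def GEntry {n : ℕ} (P : StackPartition n) (lam : Params P) (j r c : ℕ) : ℂ :=
  (∑ i : Fin P.t,
    if (i : ℕ) ≤ j ∧ P.sE i ≤ r ∧ r < P.sE ((i : ℕ) + 1)
        ∧ P.sE i ≤ c ∧ c < P.sE ((i : ℕ) + 1) then
      genCompE (P.l i) (lam i) (r - P.sE i) (c - P.sE i)
    else 0)
  +
  (∑ i : Fin P.t,
    if 1 ≤ (i : ℕ) ∧ (i : ℕ) ≤ j ∧ r = P.sE i ∧ c + 1 = P.sE i then (1 : ℂ) else 0)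

/-- The `s_j × s_j` matrix `G_j` (`0`-indexed `j`, of size `sE (j+1)`). -/
def Gm {n : ℕ} (P : StackPartition n) (lam : Params P) (j : Fin P.t) :
    Matrix (Fin (P.sE ((j : ℕ) + 1))) (Fin (P.sE ((j : ℕ) + 1))) ℂ :=
  Matrix.of fun r c => GEntry P lam j r c

/-- The multiset `[λ_{j,1},...,λ_{j,l_j}]` of stack `j`. -/
def stackMultiset {n : ℕ} (P : StackPartition n) (lam : Params P) (j : Fin P.t) :
    Multiset ℂ :=
  Multiset.map (lam j) Finset.univ.val

/-- `μ(z, j)`: multiplicity of `z` in the multiset `[λ_{j,1},...,λ_{j,l_j}]`. -/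
def mu {n : ℕ} (P : StackPartition n) (lam : Params P) (z : ℂ) (j : Fin P.t) : ℕ :=
  (stackMultiset P lam j).count z

/-- The multiset of all parameters of stacks `0,...,j` (`0`-indexed), so
`α(z, j) = (lamUpTo P lam j).count z`. -/
def lamUpTo {n : ℕ} (P : StackPartition n) (lam : Params P) (j : ℕ) : Multiset ℂ :=
  ∑ i : Fin P.t, if (i : ℕ) ≤ j then stackMultiset P lam i else 0

/-- Index type for the direct sum of one Jordan block per distinct element of a
multiset `s`, the block for `z` having size `s.count z`. -/
abbrev JordanIdx (s : Multiset ℂ) : Type := Σ z : s.toFinset, Fin (s.count z.val)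

/-- The direct sum `⊕_z J_{s.count z}(z)` over the distinct elements `z` of the
multiset `s` (lower Jordan blocks: eigenvalue on the diagonal, ones on the
subdiagonal). -/
def jordanOfMultiset (s : Multiset ℂ) : Matrix (JordanIdx s) (JordanIdx s) ℂ :=
  Matrix.of fun x y =>
    if x.1 = y.1 then
      (if (x.2 : ℕ) = (y.2 : ℕ) then x.1.val
       else if (x.2 : ℕ) = (y.2 : ℕ) + 1 then 1 else 0)
    else 0

/-- `0`-indexed Weyr characteristic: `weyr B z i = ω_{i+1}` where
`ω_k = dim ker (B - zI)^k − dim ker (B - zI)^{k-1}`. -/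
def weyr {n : ℕ} (B : Matrix (Fin n) (Fin n) ℂ) (z : ℂ) (i : ℕ) : ℕ :=
  Module.finrank ℂ (LinearMap.ker ((B - z • 1).mulVecLin ^ (i + 1)))
    - Module.finrank ℂ (LinearMap.ker ((B - z • 1).mulVecLin ^ i))

/-- `ℕ`-indexed entry of the block diagonal matrix `⊕_j (m_j - m_{j+1}) G_j`
(for each `j`, exactly `m j - m (j+1)` consecutive copies of `G_j`). -/
def dsEntry {n : ℕ} (P : StackPartition n) (lam : Params P) (r c : ℕ) : ℂ :=
  ∑ j : Fin P.t,
    if P.T j ≤ r ∧ r < P.T ((j : ℕ) + 1) ∧ P.T j ≤ c ∧ c < P.T ((j : ℕ) + 1)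
        ∧ (r - P.T j) / P.sE ((j : ℕ) + 1) = (c - P.T j) / P.sE ((j : ℕ) + 1) then
      GEntry P lam j ((r - P.T j) % P.sE ((j : ℕ) + 1)) ((c - P.T j) % P.sE ((j : ℕ) + 1))
    else 0

/-- Index type for `⊕_{j=1}^{t} (m_j - m_{j+1}) (⊕_z J_{α(z,j)}(z))`. -/
abbrev FullJordanIdx {n : ℕ} (P : StackPartition n) (lam : Params P) : Type :=
  Σ j : Fin P.t, Fin (P.m j - P.mE ((j : ℕ) + 1)) × JordanIdx (lamUpTo P lam (j : ℕ))

/-- The matrix `⊕_{j=1}^{t} (m_j - m_{j+1}) (⊕_z J_{α(z,j)}(z))`: for each `j`,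
`m j - m (j+1)` copies of the direct sum, over the distinct `z` with
`α(z,j) = μ(z,1) + ... + μ(z,j) > 0`, of the Jordan blocks `J_{α(z,j)}(z)`. -/
def fullJordan {n : ℕ} (P : StackPartition n) (lam : Params P) :
    Matrix (FullJordanIdx P lam) (FullJordanIdx P lam) ℂ :=
  Matrix.of fun x y =>
    if h : x.1 = y.1 then
      (fun y2 : Fin (P.m x.1 - P.mE ((x.1 : ℕ) + 1)) × JordanIdx (lamUpTo P lam (x.1 : ℕ)) =>
        if x.2.1 = y2.1 then jordanOfMultiset (lamUpTo P lam (x.1 : ℕ)) x.2.2 y2.2 else 0)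
      (cast (congrArg (fun j : Fin P.t =>
        Fin (P.m j - P.mE ((j : ℕ) + 1)) × JordanIdx (lamUpTo P lam (j : ℕ))) h.symm) y.2)
    else 0

end
namespace S4

variable {n : ℕ} (P : StackPartition n)

lemma sE_zero : P.sE 0 = 0 := by simp [StackPartition.sE]

lemma S_zero : P.S 0 = 0 := by simp [StackPartition.S]

lemma sum_ite_succ (f : Fin P.t → ℕ) (b : Fin P.t) :
    (∑ x : Fin P.t, if (x : ℕ) < (b : ℕ) + 1 then f x else 0)
      = (∑ x : Fin P.t, if (x : ℕ) < (b : ℕ) then f x else 0) + f b := by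
  have h : ∀ x : Fin P.t, (if (x : ℕ) < (b : ℕ) + 1 then f x else 0)
      = (if (x : ℕ) < (b : ℕ) then f x else 0) + (if x = b then f x else 0) := by
    intro x
    rcases lt_trichotomy (x : ℕ) (b : ℕ) with h | h | h
    · have hne : x ≠ b := fun e => by rw [e] at h; exact lt_irrefl _ h
      rw [if_pos (Nat.lt_succ_of_lt h), if_pos h, if_neg hne, add_zero]
    · have e : x = b := Fin.ext h
      subst e
      rw [if_pos (Nat.lt_succ_self _), if_neg (lt_irrefl _), if_pos rfl, zero_add]
    · have hne : x ≠ b := fun e => by rw [e] at h; exact lt_irrefl _ h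
      rw [if_neg (by omega), if_neg (by omega), if_neg hne, add_zero]
  rw [Finset.sum_congr rfl (fun x _ => h x), Finset.sum_add_distrib,
    Finset.sum_ite_eq' Finset.univ b f, if_pos (Finset.mem_univ b)]

lemma S_succ (b : Fin P.t) : P.S ((b : ℕ) + 1) = P.S (b : ℕ) + P.l b * P.m b :=
  sum_ite_succ P _ b

lemma sE_succ (b : Fin P.t) : P.sE ((b : ℕ) + 1) = P.sE (b : ℕ) + P.l b :=
  sum_ite_succ P _ b

lemma S_mono : Monotone P.S := by
  intro a b hab
  refine Finset.sum_le_sum fun x _ => ?_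
  split_ifs with h h2
  · exact le_rfl
  · exact absurd (lt_of_lt_of_le h hab) h2
  all_goals exact Nat.zero_le _

lemma sE_mono : Monotone P.sE := by
  intro a b hab
  refine Finset.sum_le_sum fun x _ => ?_
  split_ifs with h h2
  · exact le_rfl
  · exact absurd (lt_of_lt_of_le h hab) h2
  all_goals exact Nat.zero_le _

lemma S_le_n (b : ℕ) : P.S b ≤ n := by
  refine le_trans (Finset.sum_le_sum fun x (_ : x ∈ Finset.univ) => ?_) (le_of_eq P.sum_eq)
  split_ifs
  · exact le_rfl
  · exact Nat.zero_le _

lemma mE_eq (b : Fin P.t) : P.mE (b : ℕ) = P.m b := by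
  simp [StackPartition.mE, b.isLt]

lemma mE_pos {b : ℕ} (hb : b < P.t) : 0 < P.mE b := by
  rw [StackPartition.mE, dif_pos hb]; exact P.m_pos _

lemma mE_anti : Antitone P.mE := by
  intro a b hab
  by_cases hb : b < P.t
  · have ha : a < P.t := lt_of_le_of_lt hab hb
    simp only [StackPartition.mE, dif_pos hb, dif_pos ha]
    rcases eq_or_lt_of_le hab with e | hlt
    · subst e; exact le_rfl
    · exact le_of_lt (P.m_strictAnti ⟨a, ha⟩ ⟨b, hb⟩ hlt)
  · simp [StackPartition.mE, hb]

/-- The block containing position `k` in the `sE` scale. -/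
def blkN (k : ℕ) : ℕ := Nat.findGreatest (fun b => P.sE b ≤ k) P.t

lemma sE_blkN_le (k : ℕ) : P.sE (blkN P k) ≤ k :=
  Nat.findGreatest_spec (P := fun b => P.sE b ≤ k) (Nat.zero_le _)
    (by show P.sE 0 ≤ k; rw [sE_zero]; exact Nat.zero_le _)

variable {P}

lemma blkN_le {j : Fin P.t} {k : ℕ} (hk : k < P.sE ((j : ℕ) + 1)) :
    blkN P k ≤ (j : ℕ) := by
  by_contra h
  have h2 : P.sE ((j : ℕ) + 1) ≤ P.sE (blkN P k) := sE_mono P (by omega)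
  have := sE_blkN_le P k
  omega

lemma blkN_lt_t {j : Fin P.t} {k : ℕ} (hk : k < P.sE ((j : ℕ) + 1)) :
    blkN P k < P.t := lt_of_le_of_lt (blkN_le hk) j.isLt

lemma lt_sE_blkN_succ {j : Fin P.t} {k : ℕ} (hk : k < P.sE ((j : ℕ) + 1)) :
    k < P.sE (blkN P k + 1) := by
  by_contra h
  exact Nat.findGreatest_is_greatest (P := fun b => P.sE b ≤ k)
    (Nat.lt_succ_self _) (by show blkN P k + 1 ≤ P.t; have := blkN_lt_t hk; omega) (not_lt.mp h)

lemma blkN_eq {b : Fin P.t} {k : ℕ} (hl : P.sE (b : ℕ) ≤ k)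
    (hu : k < P.sE ((b : ℕ) + 1)) : blkN P k = (b : ℕ) := by
  have hle : (b : ℕ) ≤ blkN P k := Nat.le_findGreatest (le_of_lt b.isLt) hl
  by_contra h
  have h2 : (b : ℕ) + 1 ≤ blkN P k := by omega
  have h3 := sE_mono P h2
  have h4 := sE_blkN_le P k
  omega

end S4
namespace S4

lemma genCompE_succ {l : ℕ} (y : Fin l → ℂ) {q : ℕ} (h : q + 1 < l) :
    genCompE l y (q + 1) q = 1 := by
  rw [genCompE, if_pos ⟨h, Nat.lt_of_succ_lt h⟩, if_pos rfl]

lemma genCompE_zero_of_gt {l : ℕ} (y : Fin l → ℂ) {a q : ℕ} (h : q + 1 < a) :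
    genCompE l y a q = 0 := by
  rw [genCompE]
  split_ifs with h1 h2 h3
  · exact absurd h2 (by omega)
  · exact absurd h1.1 (by omega)
  · rfl
  · rfl

variable {n : ℕ} {P : StackPartition n} (lam : Params P) (j : Fin P.t) (i0 : ℕ)

/-- index of the `k`-th basis vector of the cyclic subspace -/
def eIdxN (P : StackPartition n) (i0 k : ℕ) : ℕ :=
  P.S (blkN P k) + (k - P.sE (blkN P k)) * P.mE (blkN P k)
    + (i0 + P.mE (blkN P k) - P.mE 0)

lemma mE0_le (H1 : P.mE 0 ≤ i0 + P.m j) {b : ℕ} (hb : b ≤ (j : ℕ)) :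
    P.mE 0 ≤ i0 + P.mE b := by
  have h1 : P.mE (j : ℕ) ≤ P.mE b := mE_anti P hb
  have h2 : P.mE (j : ℕ) = P.m j := mE_eq P j
  omega

lemma rho_lt (H1 : P.mE 0 ≤ i0 + P.m j) (H2 : i0 + P.mE ((j : ℕ) + 1) < P.mE 0)
    {b : ℕ} (hb : b ≤ (j : ℕ)) : i0 + P.mE b - P.mE 0 < P.mE b := by
  have h1 : P.mE (j : ℕ) ≤ P.mE b := mE_anti P hb
  have h2 : P.mE (j : ℕ) = P.m j := mE_eq P j
  omega

lemma rho_nopass (H1 : P.mE 0 ≤ i0 + P.m j) (H2 : i0 + P.mE ((j : ℕ) + 1) < P.mE 0) :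
    i0 + P.mE (j : ℕ) - P.mE 0 < P.mE (j : ℕ) - P.mE ((j : ℕ) + 1) := by
  have h2 : P.mE (j : ℕ) = P.m j := mE_eq P j
  have h3 : P.mE ((j : ℕ) + 1) ≤ P.mE (j : ℕ) := mE_anti P (by omega)
  omega

lemma Gcol {k b : ℕ} (hbt : b < P.t) (hbj : b ≤ (j : ℕ)) (hbl : P.sE b ≤ k)
    (hbu : k < P.sE (b + 1)) (k' : ℕ) :
    GEntry P lam j k' k
      = (if P.sE b ≤ k' ∧ k' < P.sE (b + 1) then
          genCompE (P.l ⟨b, hbt⟩) (lam ⟨b, hbt⟩) (k' - P.sE b) (k - P.sE b) else 0)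
      + (if b + 1 ≤ (j : ℕ) ∧ k' = P.sE (b + 1) ∧ k + 1 = P.sE (b + 1) then 1 else 0) := by
  have hxb1 : ∀ x : Fin P.t, 1 ≤ (x : ℕ) → k + 1 = P.sE (x : ℕ) → (x : ℕ) = b + 1 := by
    intro x _ hx4
    rcases lt_trichotomy (x : ℕ) (b + 1) with h | h | h
    · have := sE_mono P (show (x : ℕ) ≤ b by omega); omega
    · exact h
    · have hb2 : b + 1 < P.t := lt_of_le_of_lt (show b + 1 ≤ (x : ℕ) by omega) x.isLt
      have h5 : P.sE (b + 1 + 1) ≤ P.sE (x : ℕ) := sE_mono P (by omega)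
      have h6 : P.sE (b + 1 + 1) = P.sE (b + 1) + P.l ⟨b + 1, hb2⟩ := sE_succ P ⟨b + 1, hb2⟩
      have h7 := P.l_pos ⟨b + 1, hb2⟩
      omega
  simp only [GEntry]
  congr 1
  · rw [Finset.sum_eq_single_of_mem ⟨b, hbt⟩ (Finset.mem_univ _)]
    · refine if_congr ?_ rfl rfl
      constructor
      · rintro ⟨_, h2, h3, _, _⟩; exact ⟨h2, h3⟩
      · rintro ⟨h2, h3⟩; exact ⟨hbj, h2, h3, hbl, hbu⟩
    · intro x _ hx
      apply if_neg
      rintro ⟨_, _, _, h4, h5⟩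
      have e1 : blkN P k = (x : ℕ) := blkN_eq h4 h5
      have e2 : blkN P k = b := blkN_eq (b := ⟨b, hbt⟩) hbl hbu
      exact hx (Fin.ext (show (x : ℕ) = b by omega))
  · by_cases hcase : b + 1 ≤ (j : ℕ) ∧ k + 1 = P.sE (b + 1)
    · obtain ⟨hc1, hc2⟩ := hcase
      have hb1t : b + 1 < P.t := lt_of_le_of_lt hc1 j.isLt
      rw [Finset.sum_eq_single_of_mem ⟨b + 1, hb1t⟩ (Finset.mem_univ _)]
      · refine if_congr ?_ rfl rfl
        constructor
        · rintro ⟨_, _, h3, _⟩; exact ⟨hc1, h3, hc2⟩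
        · rintro ⟨_, h2, _⟩; exact ⟨show 1 ≤ b + 1 by omega, hc1, h2, hc2⟩
      · intro x _ hx
        apply if_neg
        rintro ⟨hx1, hx2, hx3, hx4⟩
        exact hx (Fin.ext (show (x : ℕ) = b + 1 from hxb1 x hx1 hx4))
    · rw [if_neg (by tauto)]
      refine Finset.sum_eq_zero fun x _ => if_neg ?_
      rintro ⟨hx1, hx2, hx3, hx4⟩
      have hxb : (x : ℕ) = b + 1 := hxb1 x hx1 hx4
      exact hcase ⟨by omega, by rw [← hxb]; exact hx4⟩

lemma G_subdiag {k : ℕ} (hk1 : k + 1 < P.sE ((j : ℕ) + 1)) :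
    GEntry P lam j (k + 1) k = 1 := by
  have hk : k < P.sE ((j : ℕ) + 1) := by omega
  have hbt : blkN P k < P.t := blkN_lt_t hk
  have hbj : blkN P k ≤ (j : ℕ) := blkN_le hk
  have hbl : P.sE (blkN P k) ≤ k := sE_blkN_le P k
  have hbu : k < P.sE (blkN P k + 1) := lt_sE_blkN_succ hk
  rw [Gcol lam j hbt hbj hbl hbu]
  rcases eq_or_lt_of_le (show k + 1 ≤ P.sE (blkN P k + 1) from hbu) with he | hl
  · have hbj1 : blkN P k + 1 ≤ (j : ℕ) := by
      by_contra hc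
      have : P.sE ((j : ℕ) + 1) ≤ P.sE (blkN P k + 1) := sE_mono P (by omega)
      omega
    rw [if_neg (by omega), if_pos ⟨hbj1, he, he⟩, zero_add]
  · have hsucc : P.sE (blkN P k + 1) = P.sE (blkN P k) + P.l ⟨blkN P k, hbt⟩ :=
      sE_succ P ⟨blkN P k, hbt⟩
    rw [if_pos ⟨by omega, hl⟩, if_neg (by omega)]
    have he2 : k + 1 - P.sE (blkN P k) = (k - P.sE (blkN P k)) + 1 := by omega
    rw [he2, genCompE_succ _ (by omega), add_zero]

lemma G_upper {k k' : ℕ} (hk' : k' < P.sE ((j : ℕ) + 1)) (hgt : k + 1 < k') :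
    GEntry P lam j k' k = 0 := by
  have hk : k < P.sE ((j : ℕ) + 1) := by omega
  have hbt : blkN P k < P.t := blkN_lt_t hk
  have hbl : P.sE (blkN P k) ≤ k := sE_blkN_le P k
  have hbu : k < P.sE (blkN P k + 1) := lt_sE_blkN_succ hk
  rw [Gcol lam j hbt (blkN_le hk) hbl hbu]
  by_cases h : P.sE (blkN P k) ≤ k' ∧ k' < P.sE (blkN P k + 1)
  · rw [if_pos h, genCompE_zero_of_gt _ (by omega), if_neg (by omega), add_zero]
  · rw [if_neg h, if_neg (by omega), add_zero]

end S4
namespace S4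

variable {n : ℕ} {P : StackPartition n} (lam : Params P) (j : Fin P.t) (i0 : ℕ)

lemma blkN_zero (ht : 0 < P.t) : blkN P 0 = 0 := by
  have h6 : P.sE (0 + 1) = P.sE 0 + P.l ⟨0, ht⟩ := sE_succ P ⟨0, ht⟩
  have h7 := P.l_pos ⟨0, ht⟩
  have := sE_zero P
  exact blkN_eq (b := ⟨0, ht⟩) (show P.sE 0 ≤ 0 by omega) (show (0 : ℕ) < P.sE (0 + 1) by omega)

lemma eIdx_zero (ht : 0 < P.t) : eIdxN P i0 0 = i0 := by
  have h1 := blkN_zero (P := P) ht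
  have h2 := sE_zero P
  have h3 := S_zero P
  simp only [eIdxN, h1, h2, h3, Nat.sub_zero, Nat.zero_mul, Nat.zero_add]
  omega

lemma eIdx_decomp (H1 : P.mE 0 ≤ i0 + P.m j) (H2 : i0 + P.mE ((j : ℕ) + 1) < P.mE 0) {k : ℕ} (hk : k < P.sE ((j : ℕ) + 1)) :
    P.S (blkN P k) ≤ eIdxN P i0 k ∧ eIdxN P i0 k < P.S (blkN P k + 1) := by
  have hbt : blkN P k < P.t := blkN_lt_t hk
  have hbj : blkN P k ≤ (j : ℕ) := blkN_le hk
  have hbl : P.sE (blkN P k) ≤ k := sE_blkN_le P k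
  have hbu : k < P.sE (blkN P k + 1) := lt_sE_blkN_succ hk
  have hmb : P.mE (blkN P k) = P.m ⟨blkN P k, hbt⟩ := mE_eq P ⟨blkN P k, hbt⟩
  have hsE : P.sE (blkN P k + 1) = P.sE (blkN P k) + P.l ⟨blkN P k, hbt⟩ :=
    sE_succ P ⟨blkN P k, hbt⟩
  have hS : P.S (blkN P k + 1)
      = P.S (blkN P k) + P.l ⟨blkN P k, hbt⟩ * P.mE (blkN P k) := by
    rw [S_succ P ⟨blkN P k, hbt⟩, ← hmb]
  have hρ : i0 + P.mE (blkN P k) - P.mE 0 < P.mE (blkN P k) := rho_lt j i0 H1 H2 hbj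
  have hqm : (k - P.sE (blkN P k)) * P.mE (blkN P k)
        + (i0 + P.mE (blkN P k) - P.mE 0)
      < P.l ⟨blkN P k, hbt⟩ * P.mE (blkN P k) := by
    have h1 : ((k - P.sE (blkN P k)) + 1) * P.mE (blkN P k)
        ≤ P.l ⟨blkN P k, hbt⟩ * P.mE (blkN P k) :=
      Nat.mul_le_mul_right _ (by omega)
    have h2 : ((k - P.sE (blkN P k)) + 1) * P.mE (blkN P k)
        = (k - P.sE (blkN P k)) * P.mE (blkN P k) + P.mE (blkN P k) := by ring
    omega
  have hcol : eIdxN P i0 k = P.S (blkN P k)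
      + (k - P.sE (blkN P k)) * P.mE (blkN P k) + (i0 + P.mE (blkN P k) - P.mE 0) := rfl
  omega

lemma eIdx_lt_n (H1 : P.mE 0 ≤ i0 + P.m j) (H2 : i0 + P.mE ((j : ℕ) + 1) < P.mE 0)
    {k : ℕ} (hk : k < P.sE ((j : ℕ) + 1)) : eIdxN P i0 k < n :=
  lt_of_lt_of_le (eIdx_decomp j i0 H1 H2 hk).2 (S_le_n P _)

lemma eIdx_inj (H1 : P.mE 0 ≤ i0 + P.m j) (H2 : i0 + P.mE ((j : ℕ) + 1) < P.mE 0) {k k' : ℕ} (hk : k < P.sE ((j : ℕ) + 1)) (hk' : k' < P.sE ((j : ℕ) + 1))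
    (he : eIdxN P i0 k = eIdxN P i0 k') : k = k' := by
  have hd := eIdx_decomp j i0 H1 H2 hk
  have hd' := eIdx_decomp j i0 H1 H2 hk'
  have hbb : blkN P k = blkN P k' := by
    rcases lt_trichotomy (blkN P k) (blkN P k') with h | h | h
    · have := S_mono P (show blkN P k + 1 ≤ blkN P k' by omega); omega
    · exact h
    · have := S_mono P (show blkN P k' + 1 ≤ blkN P k by omega); omega
  have hbt : blkN P k < P.t := blkN_lt_t hk
  have hbl : P.sE (blkN P k) ≤ k := sE_blkN_le P k
  have hbl' : P.sE (blkN P k') ≤ k' := sE_blkN_le P k'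
  have hM : 0 < P.mE (blkN P k) := mE_pos P hbt
  simp only [eIdxN, ← hbb] at he
  have h2 : (k - P.sE (blkN P k)) * P.mE (blkN P k)
      = (k' - P.sE (blkN P k)) * P.mE (blkN P k) := by omega
  have h3 : k - P.sE (blkN P k) = k' - P.sE (blkN P k) :=
    Nat.eq_of_mul_eq_mul_right hM h2
  have hsEeq : P.sE (blkN P k) = P.sE (blkN P k') := by rw [hbb]
  omega

lemma key_entry (H1 : P.mE 0 ≤ i0 + P.m j) (H2 : i0 + P.mE ((j : ℕ) + 1) < P.mE 0) {k : ℕ} (hk : k < P.sE ((j : ℕ) + 1)) (r : ℕ) :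
    cpmEntry P lam r (eIdxN P i0 k)
      = ∑ k' : Fin (P.sE ((j : ℕ) + 1)),
          GEntry P lam j (k' : ℕ) k * (if r = eIdxN P i0 (k' : ℕ) then 1 else 0) := by
  have hbt : blkN P k < P.t := blkN_lt_t hk
  have hbj : blkN P k ≤ (j : ℕ) := blkN_le hk
  have hbl : P.sE (blkN P k) ≤ k := sE_blkN_le P k
  have hbu : k < P.sE (blkN P k + 1) := lt_sE_blkN_succ hk
  set b := blkN P k with hbdef
  set bF : Fin P.t := ⟨b, hbt⟩ with hbF
  have hbv : (bF : ℕ) = b := rfl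
  have hmb : P.mE b = P.m bF := mE_eq P bF
  have hsE : P.sE (b + 1) = P.sE b + P.l bF := sE_succ P bF
  have hS : P.S (b + 1) = P.S b + P.l bF * P.m bF := S_succ P bF
  set q := k - P.sE b with hq
  have hql : q < P.l bF := by omega
  set ρ := i0 + P.mE b - P.mE 0 with hρdef
  have hρ : ρ < P.m bF := by
    have := rho_lt j i0 H1 H2 hbj; omega
  have hLpos : 0 < P.l bF := P.l_pos bF
  have hMpos : 0 < P.m bF := P.m_pos bF
  have hcol : eIdxN P i0 k = P.S b + q * P.m bF + ρ := by
    have h0 : eIdxN P i0 k = P.S b + q * P.mE b + ρ := by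
      simp only [eIdxN, ← hbdef, ← hq, ← hρdef]
    rw [h0, hmb]
  have hqm : q * P.m bF + ρ < P.l bF * P.m bF := by
    have h1 : (q + 1) * P.m bF ≤ P.l bF * P.m bF := Nat.mul_le_mul_right _ hql
    have h2 : (q + 1) * P.m bF = q * P.m bF + P.m bF := by ring
    omega
  have hcol1 : P.S b ≤ eIdxN P i0 k := by omega
  have hcol2 : eIdxN P i0 k < P.S (b + 1) := by omega
  have hsub : eIdxN P i0 k - P.S b = q * P.m bF + ρ := by omega
  have hmod : (eIdxN P i0 k - P.S b) % P.m bF = ρ := by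
    have h2 : q * P.m bF + ρ = P.m bF * q + ρ := by ring
    rw [hsub, h2, Nat.mul_add_mod, Nat.mod_eq_of_lt hρ]
  have hdiv : (eIdxN P i0 k - P.S b) / P.m bF = q := by
    have h2 : q * P.m bF + ρ = P.m bF * q + ρ := by ring
    rw [hsub, h2, Nat.mul_add_div hMpos, Nat.div_eq_of_lt hρ, add_zero]
  -- the index of the first slot of the next block, and pass/no-pass facts
  have hb1 : b + 1 ≤ (j : ℕ) → eIdxN P i0 (P.sE (b + 1))
      = P.S (b + 1) + (i0 + P.mE (b + 1) - P.mE 0) := by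
    intro hb1j
    have hb1t : b + 1 < P.t := lt_of_le_of_lt hb1j j.isLt
    have hlp := P.l_pos ⟨b + 1, hb1t⟩
    have h6 : P.sE (b + 1 + 1) = P.sE (b + 1) + P.l ⟨b + 1, hb1t⟩ := sE_succ P ⟨b + 1, hb1t⟩
    have hblk : blkN P (P.sE (b + 1)) = b + 1 :=
      blkN_eq (b := ⟨b + 1, hb1t⟩) le_rfl (show P.sE (b + 1) < P.sE (b + 1 + 1) by omega)
    simp only [eIdxN, hblk, Nat.sub_self, Nat.zero_mul, Nat.add_zero]
  have hpass : b + 1 ≤ (j : ℕ) → P.mE 0 ≤ i0 + P.mE (b + 1) :=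
    fun h => mE0_le j i0 H1 h
  have hnopass : b = (j : ℕ) → ρ < P.m bF - P.mE (b + 1) := by
    intro e
    have h5 := rho_nopass j i0 H1 H2
    rw [← e] at h5
    omega
  have hanti : P.mE (b + 1) ≤ P.mE b := mE_anti P (by omega)
  -- first sum
  have hsum1 : (∑ x : Fin P.t,
        if P.S x ≤ r ∧ r < P.S ((x : ℕ) + 1) ∧ P.S x ≤ eIdxN P i0 k
            ∧ eIdxN P i0 k < P.S ((x : ℕ) + 1)
            ∧ (r - P.S x) % P.m x = (eIdxN P i0 k - P.S x) % P.m x then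
          genCompE (P.l x) (lam x) ((r - P.S x) / P.m x) ((eIdxN P i0 k - P.S x) / P.m x)
        else 0)
      = (if P.S b ≤ r ∧ r < P.S (b + 1) ∧ (r - P.S b) % P.m bF = ρ then
          genCompE (P.l bF) (lam bF) ((r - P.S b) / P.m bF) q else 0) := by
    rw [Finset.sum_eq_single_of_mem bF (Finset.mem_univ _)]
    · show (if P.S b ≤ r ∧ r < P.S (b + 1) ∧ P.S b ≤ eIdxN P i0 k
            ∧ eIdxN P i0 k < P.S (b + 1)
            ∧ (r - P.S b) % P.m bF = (eIdxN P i0 k - P.S b) % P.m bF then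
          genCompE (P.l bF) (lam bF) ((r - P.S b) / P.m bF) ((eIdxN P i0 k - P.S b) / P.m bF)
        else 0) = _
      rw [hmod, hdiv]
      refine if_congr ?_ rfl rfl
      exact ⟨fun ⟨a1, a2, _, _, a5⟩ => ⟨a1, a2, a5⟩,
        fun ⟨a1, a2, a5⟩ => ⟨a1, a2, hcol1, hcol2, a5⟩⟩
    · intro x _ hx
      apply if_neg
      rintro ⟨_, _, h3, h4, _⟩
      have hne : (x : ℕ) ≠ b := fun e => hx (Fin.ext (show (x : ℕ) = b from e))
      rcases lt_or_gt_of_ne hne with h | h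
      · have : P.S ((x : ℕ) + 1) ≤ P.S b := S_mono P (by omega); omega
      · have : P.S (b + 1) ≤ P.S (x : ℕ) := S_mono P (by omega); omega
  -- second sum
  have hSm : P.S (b + 1) - P.m bF = P.S b + (P.l bF - 1) * P.m bF := by
    have h1 : (P.l bF - 1) * P.m bF = P.l bF * P.m bF - P.m bF := by
      rw [Nat.sub_mul, one_mul]
    have h2 : P.m bF ≤ P.l bF * P.m bF := Nat.le_mul_of_pos_left _ hLpos
    omega
  have hql2 : q + 1 = P.l bF → q * P.m bF = (P.l bF - 1) * P.m bF := by
    intro h; congr 1; omega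
  have hsum2 : (∑ x : Fin P.t,
        if P.S ((x : ℕ) + 1) ≤ r ∧ r < P.S ((x : ℕ) + 1) + P.mE ((x : ℕ) + 1)
            ∧ P.S ((x : ℕ) + 1) - P.m x ≤ eIdxN P i0 k
            ∧ eIdxN P i0 k < P.S ((x : ℕ) + 1)
            ∧ eIdxN P i0 k - (P.S ((x : ℕ) + 1) - P.m x)
                = (P.m x - P.mE ((x : ℕ) + 1)) + (r - P.S ((x : ℕ) + 1)) then
          (1 : ℂ) else 0)
      = (if b + 1 ≤ (j : ℕ) ∧ q + 1 = P.l bF ∧ r = eIdxN P i0 (P.sE (b + 1)) then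
          1 else 0) := by
    rw [Finset.sum_eq_single_of_mem bF (Finset.mem_univ _)]
    · show (if P.S (b + 1) ≤ r ∧ r < P.S (b + 1) + P.mE (b + 1)
            ∧ P.S (b + 1) - P.m bF ≤ eIdxN P i0 k
            ∧ eIdxN P i0 k < P.S (b + 1)
            ∧ eIdxN P i0 k - (P.S (b + 1) - P.m bF)
                = (P.m bF - P.mE (b + 1)) + (r - P.S (b + 1)) then
          (1 : ℂ) else 0) = _
      refine if_congr ?_ rfl rfl
      constructor
      · rintro ⟨c1, c2, c3, _, c5⟩
        have hq1 : q + 1 = P.l bF := by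
          by_contra hne
          have h1 : (q + 1) * P.m bF ≤ (P.l bF - 1) * P.m bF :=
            Nat.mul_le_mul_right _ (by omega)
          have h2 : (q + 1) * P.m bF = q * P.m bF + P.m bF := by ring
          omega
        have hqlm := hql2 hq1
        have hb1j : b + 1 ≤ (j : ℕ) := by
          by_contra hc
          have hbj' : b = (j : ℕ) := by omega
          have hnp := hnopass hbj'
          omega
        have hpass' := hpass hb1j
        refine ⟨hb1j, hq1, ?_⟩
        rw [hb1 hb1j]
        omega
      · rintro ⟨hb1j, hq1, hr⟩
        have hqlm := hql2 hq1
        have hpass' := hpass hb1j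
        have hρ2 : i0 + P.mE (b + 1) - P.mE 0 < P.mE (b + 1) :=
          rho_lt j i0 H1 H2 hb1j
        rw [hb1 hb1j] at hr
        exact ⟨by omega, by omega, by omega, by omega, by omega⟩
    · intro x _ hx
      apply if_neg
      rintro ⟨_, _, h3, h4, _⟩
      have hne : (x : ℕ) ≠ b := fun e => hx (Fin.ext (show (x : ℕ) = b from e))
      rcases lt_or_gt_of_ne hne with h | h
      · have : P.S ((x : ℕ) + 1) ≤ P.S b := S_mono P (by omega); omega
      · have h5 : P.S (b + 1) ≤ P.S (x : ℕ) := S_mono P (by omega)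
        have h6 : P.S ((x : ℕ) + 1) = P.S (x : ℕ) + P.l x * P.m x := S_succ P x
        have h7 : P.m x ≤ P.l x * P.m x := Nat.le_mul_of_pos_left _ (P.l_pos x)
        omega
  -- eIdxN on block b
  have hEk : ∀ a : ℕ, a < P.l bF → eIdxN P i0 (P.sE b + a) = P.S b + a * P.m bF + ρ := by
    intro a ha
    have hblk : blkN P (P.sE b + a) = b :=
      blkN_eq (b := bF) (Nat.le_add_right _ _) (show P.sE b + a < P.sE (b + 1) by omega)
    have hsa : P.sE b + a - P.sE b = a := by omega
    have h0 : eIdxN P i0 (P.sE b + a) = P.S b + a * P.mE b + ρ := by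
      simp only [eIdxN, hblk, hsa, ← hρdef]
    rw [h0, hmb]
  -- X-part of the right-hand side
  have hX : (if P.S b ≤ r ∧ r < P.S (b + 1) ∧ (r - P.S b) % P.m bF = ρ then
          genCompE (P.l bF) (lam bF) ((r - P.S b) / P.m bF) q else 0)
      = ∑ k' : Fin (P.sE ((j : ℕ) + 1)),
          (if P.sE b ≤ (k' : ℕ) ∧ (k' : ℕ) < P.sE (b + 1) then
            genCompE (P.l bF) (lam bF) ((k' : ℕ) - P.sE b) q else 0)
          * (if r = eIdxN P i0 (k' : ℕ) then 1 else 0) := by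
    by_cases hT : P.S b ≤ r ∧ r < P.S (b + 1) ∧ (r - P.S b) % P.m bF = ρ
    · obtain ⟨t1, t2, t3⟩ := hT
      obtain ⟨a, hadef⟩ : ∃ a, a = (r - P.S b) / P.m bF := ⟨_, rfl⟩
      have hda := Nat.div_add_mod (r - P.S b) (P.m bF)
      rw [t3, ← hadef] at hda
      have hmc : P.m bF * a = a * P.m bF := mul_comm _ _
      have hr_eq : r = P.S b + a * P.m bF + ρ := by omega
      have hal : a < P.l bF := by
        by_contra hc
        have : P.l bF * P.m bF ≤ a * P.m bF := Nat.mul_le_mul_right _ (by omega)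
        omega
      have haidx : P.sE b + a < P.sE ((j : ℕ) + 1) := by
        have : P.sE (b + 1) ≤ P.sE ((j : ℕ) + 1) := sE_mono P (by omega)
        omega
      rw [if_pos ⟨t1, t2, t3⟩, ← hadef,
        Finset.sum_eq_single_of_mem (⟨P.sE b + a, haidx⟩ : Fin _) (Finset.mem_univ _)]
      · show _ = (if P.sE b ≤ P.sE b + a ∧ P.sE b + a < P.sE (b + 1) then
            genCompE (P.l bF) (lam bF) (P.sE b + a - P.sE b) q else 0)
          * (if r = eIdxN P i0 (P.sE b + a) then 1 else 0)
        have hsa : P.sE b + a - P.sE b = a := by omega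
        rw [hsa, if_pos ⟨Nat.le_add_right _ _, by omega⟩,
          if_pos (by rw [hEk a hal]; exact hr_eq), mul_one]
      · intro x _ hx
        by_cases hxb : P.sE b ≤ (x : ℕ) ∧ (x : ℕ) < P.sE (b + 1)
        · rw [if_pos hxb]
          rw [if_neg, mul_zero]
          intro hre
          have ha' : (x : ℕ) - P.sE b < P.l bF := by omega
          have hx2 : P.sE b + ((x : ℕ) - P.sE b) = (x : ℕ) := by omega
          have hE := hEk _ ha'
          rw [hx2] at hE
          rw [hE] at hre
          have h8 : ((x : ℕ) - P.sE b) * P.m bF = a * P.m bF := by omega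
          have hxa : (x : ℕ) - P.sE b = a := Nat.eq_of_mul_eq_mul_right hMpos h8
          exact hx (Fin.ext (show (x : ℕ) = P.sE b + a by omega))
        · rw [if_neg hxb, zero_mul]
    · rw [if_neg hT]
      refine (Finset.sum_eq_zero fun x _ => ?_).symm
      by_cases hxb : P.sE b ≤ (x : ℕ) ∧ (x : ℕ) < P.sE (b + 1)
      · rw [if_pos hxb]
        by_cases hre : r = eIdxN P i0 (x : ℕ)
        · exfalso
          have ha' : (x : ℕ) - P.sE b < P.l bF := by omega
          have hx2 : P.sE b + ((x : ℕ) - P.sE b) = (x : ℕ) := by omega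
          have hE := hEk _ ha'
          rw [hx2] at hE
          rw [hE] at hre
          have haqm : ((x : ℕ) - P.sE b) * P.m bF + ρ < P.l bF * P.m bF := by
            have h2 : (((x : ℕ) - P.sE b) + 1) * P.m bF ≤ P.l bF * P.m bF :=
              Nat.mul_le_mul_right _ ha'
            have h3 : (((x : ℕ) - P.sE b) + 1) * P.m bF
                = ((x : ℕ) - P.sE b) * P.m bF + P.m bF := by ring
            omega
          refine hT ⟨by omega, by omega, ?_⟩
          have hsub2 : r - P.S b = ((x : ℕ) - P.sE b) * P.m bF + ρ := by omega
          have h9 : ((x : ℕ) - P.sE b) * P.m bF + ρ = P.m bF * ((x : ℕ) - P.sE b) + ρ := by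
            ring
          rw [hsub2, h9, Nat.mul_add_mod, Nat.mod_eq_of_lt hρ]
        · rw [if_neg hre, mul_zero]
      · rw [if_neg hxb, zero_mul]
  -- Y-part of the right-hand side
  have hY : (if b + 1 ≤ (j : ℕ) ∧ q + 1 = P.l bF ∧ r = eIdxN P i0 (P.sE (b + 1)) then
          (1 : ℂ) else 0)
      = ∑ k' : Fin (P.sE ((j : ℕ) + 1)),
          (if b + 1 ≤ (j : ℕ) ∧ (k' : ℕ) = P.sE (b + 1) ∧ k + 1 = P.sE (b + 1) then
            (1 : ℂ) else 0)
          * (if r = eIdxN P i0 (k' : ℕ) then 1 else 0) := by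
    by_cases hc : b + 1 ≤ (j : ℕ) ∧ k + 1 = P.sE (b + 1)
    · obtain ⟨hc1, hc2⟩ := hc
      have hb1t : b + 1 < P.t := lt_of_le_of_lt hc1 j.isLt
      have hlp := P.l_pos ⟨b + 1, hb1t⟩
      have h6 : P.sE (b + 1 + 1) = P.sE (b + 1) + P.l ⟨b + 1, hb1t⟩ := sE_succ P ⟨b + 1, hb1t⟩
      have hidx : P.sE (b + 1) < P.sE ((j : ℕ) + 1) := by
        have : P.sE (b + 1 + 1) ≤ P.sE ((j : ℕ) + 1) := sE_mono P (by omega)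
        omega
      have hlhs : (if b + 1 ≤ (j : ℕ) ∧ q + 1 = P.l bF ∧ r = eIdxN P i0 (P.sE (b + 1)) then
            (1 : ℂ) else 0)
          = (if r = eIdxN P i0 (P.sE (b + 1)) then (1 : ℂ) else 0) :=
        if_congr ⟨fun h => h.2.2, fun h => ⟨hc1, by omega, h⟩⟩ rfl rfl
      rw [hlhs,
        Finset.sum_eq_single_of_mem (⟨P.sE (b + 1), hidx⟩ : Fin _) (Finset.mem_univ _)]
      · show (if r = eIdxN P i0 (P.sE (b + 1)) then (1 : ℂ) else 0)
            = (if b + 1 ≤ (j : ℕ) ∧ P.sE (b + 1) = P.sE (b + 1) ∧ k + 1 = P.sE (b + 1) then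
                (1 : ℂ) else 0) * (if r = eIdxN P i0 (P.sE (b + 1)) then 1 else 0)
        rw [if_pos (show b + 1 ≤ (j : ℕ) ∧ P.sE (b + 1) = P.sE (b + 1)
            ∧ k + 1 = P.sE (b + 1) from ⟨hc1, rfl, hc2⟩), one_mul]
      · intro x _ hx
        rw [if_neg, zero_mul]
        rintro ⟨_, e, _⟩
        exact hx (Fin.ext (show (x : ℕ) = P.sE (b + 1) from e))
    · have hd : ¬(b + 1 ≤ (j : ℕ) ∧ q + 1 = P.l bF ∧ r = eIdxN P i0 (P.sE (b + 1))) := by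
        rintro ⟨d1, d2, _⟩; exact hc ⟨d1, by omega⟩
      rw [if_neg hd]
      refine (Finset.sum_eq_zero fun x _ => ?_).symm
      rw [if_neg (fun h => hc ⟨h.1, h.2.2⟩), zero_mul]
  have hGc : ∀ k' : Fin (P.sE ((j : ℕ) + 1)), GEntry P lam j (k' : ℕ) k
      = (if P.sE b ≤ (k' : ℕ) ∧ (k' : ℕ) < P.sE (b + 1) then
          genCompE (P.l bF) (lam bF) ((k' : ℕ) - P.sE b) q else 0)
        + (if b + 1 ≤ (j : ℕ) ∧ (k' : ℕ) = P.sE (b + 1) ∧ k + 1 = P.sE (b + 1) then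
            (1 : ℂ) else 0) := by
    intro k'
    rw [Gcol lam j hbt hbj hbl hbu (k' : ℕ), ← hq]
  simp only [cpmEntry]
  rw [hsum1, hsum2, hX, hY]
  simp only [hGc, add_mul, Finset.sum_add_distrib]

end S4
set_option maxHeartbeats 400000 in
/-- For a canonical plane matrix `A ∈ 𝒫_π` and `i ∈ P_j`
(`0`-indexed: `m₁ − m_j ≤ i < m₁ − m_{j+1}`), the subspace `V_i = ℂ[A]·e_i` is
`A`-invariant and has a basis consisting of standard basis vectors with respect
to which the restriction of `A` is represented by the `s_j × s_j` matrix
`G_j`. -/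
theorem statement4 (n : ℕ) (hn : 2 ≤ n) (P : StackPartition n) (lam : Params P)
    (j : Fin P.t) (i : Fin n)
    (h1 : P.mE 0 - P.m j ≤ (i : ℕ)) (h2 : (i : ℕ) < P.mE 0 - P.mE ((j : ℕ) + 1)) :
    ∃ (hinv : ∀ x ∈ cyclicSpan (cpm P lam) (Pi.single i 1),
        (cpm P lam).mulVecLin x ∈ cyclicSpan (cpm P lam) (Pi.single i 1))
      (b : Module.Basis (Fin (P.sE ((j : ℕ) + 1))) ℂ (cyclicSpan (cpm P lam) (Pi.single i 1))),
      (∀ k, ∃ i' : Fin n, (b k : Fin n → ℂ) = Pi.single i' 1) ∧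
      LinearMap.toMatrix b b ((cpm P lam).mulVecLin.restrict hinv) = Gm P lam j := by
  classical
  have ht : 0 < P.t := j.pos
  set A := cpm P lam with hA
  set i0 : ℕ := (i : ℕ) with hi0
  have hmj : P.mE (j : ℕ) = P.m j := S4.mE_eq P j
  have haj : P.mE (j : ℕ) ≤ P.mE 0 := S4.mE_anti P (Nat.zero_le _)
  have haj1 : P.mE ((j : ℕ) + 1) ≤ P.mE 0 := S4.mE_anti P (Nat.zero_le _)
  have H1 : P.mE 0 ≤ i0 + P.m j := by omega
  have H2 : i0 + P.mE ((j : ℕ) + 1) < P.mE 0 := by omega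
  have hN0 : 0 < P.sE ((j : ℕ) + 1) := by
    have h6 : P.sE ((j : ℕ) + 1) = P.sE (j : ℕ) + P.l j := S4.sE_succ P j
    have := P.l_pos j
    omega
  let f : Fin (P.sE ((j : ℕ) + 1)) → Fin n :=
    fun k => ⟨S4.eIdxN P i0 (k : ℕ), S4.eIdx_lt_n j i0 H1 H2 k.isLt⟩
  let v : Fin (P.sE ((j : ℕ) + 1)) → (Fin n → ℂ) := fun k => Pi.single (f k) 1
  have hfinj : Function.Injective f := fun k k' he =>
    Fin.ext (S4.eIdx_inj j i0 H1 H2 k.isLt k'.isLt (congrArg Fin.val he))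
  have keyv : ∀ k : Fin (P.sE ((j : ℕ) + 1)),
      A *ᵥ v k = ∑ k' : Fin (P.sE ((j : ℕ) + 1)), GEntry P lam j (k' : ℕ) (k : ℕ) • v k' := by
    intro k
    funext r
    have hL : (A *ᵥ v k) r = cpmEntry P lam (r : ℕ) (S4.eIdxN P i0 (k : ℕ)) := by
      show (A *ᵥ Pi.single (f k) 1) r = _
      simp only [Matrix.mulVec_single_one, mul_one]
      rfl
    have hR : (∑ k' : Fin (P.sE ((j : ℕ) + 1)), GEntry P lam j (k' : ℕ) (k : ℕ) • v k') r
        = ∑ k' : Fin (P.sE ((j : ℕ) + 1)), GEntry P lam j (k' : ℕ) (k : ℕ)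
            * (if (r : ℕ) = S4.eIdxN P i0 (k' : ℕ) then 1 else 0) := by
      rw [Finset.sum_apply]
      refine Finset.sum_congr rfl fun k' _ => ?_
      have hv' : v k' r = if (r : ℕ) = S4.eIdxN P i0 (k' : ℕ) then 1 else 0 := by
        simp only [v, Pi.single_apply]
        exact if_congr ⟨fun h => congrArg Fin.val h, fun h => Fin.ext h⟩ rfl rfl
      rw [Pi.smul_apply, hv', smul_eq_mul]
    rw [hL, hR]
    exact S4.key_entry lam j i0 H1 H2 k.isLt (r : ℕ)
  set V := cyclicSpan A (Pi.single i 1) with hV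
  have hmem0 : Pi.single i (1 : ℂ) ∈ V :=
    Submodule.subset_span ⟨0, by
      show A ^ 0 *ᵥ Pi.single i 1 = Pi.single i 1
      rw [pow_zero, Matrix.one_mulVec]⟩
  have hVinv : ∀ x ∈ V, A *ᵥ x ∈ V := by
    intro x hx
    induction hx using Submodule.span_induction with
    | mem y hy =>
      obtain ⟨p, rfl⟩ := hy
      exact Submodule.subset_span ⟨p + 1, by
        show A ^ (p + 1) *ᵥ Pi.single i 1 = A *ᵥ ((fun k => A ^ k *ᵥ Pi.single i 1) p)
        show A ^ (p + 1) *ᵥ Pi.single i 1 = A *ᵥ (A ^ p *ᵥ Pi.single i 1)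
        rw [pow_succ', ← Matrix.mulVec_mulVec]⟩
    | zero => rw [Matrix.mulVec_zero]; exact Submodule.zero_mem _
    | add a b _ _ ha hb => rw [Matrix.mulVec_add]; exact Submodule.add_mem _ ha hb
    | smul c a _ ha => rw [Matrix.mulVec_smul]; exact Submodule.smul_mem _ _ ha
  have hv0 : ∀ h0, v ⟨0, h0⟩ = Pi.single i 1 := by
    intro h0
    have he0 : S4.eIdxN P i0 0 = i0 := S4.eIdx_zero i0 ht
    have hf0 : f ⟨0, h0⟩ = i := Fin.ext (by simpa [f] using he0)
    simp [v, hf0]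
  have hvV : ∀ (kv : ℕ) (hkv : kv < P.sE ((j : ℕ) + 1)), v ⟨kv, hkv⟩ ∈ V := by
    intro kv
    induction kv using Nat.strong_induction_on with
    | _ kv ih =>
      intro hkv
      by_cases h0 : kv = 0
      · subst h0
        rw [hv0 hkv]
        exact hmem0
      · obtain ⟨kp, rfl⟩ := Nat.exists_eq_succ_of_ne_zero h0
        have hkp : kp < P.sE ((j : ℕ) + 1) := by omega
        have hAv : A *ᵥ v ⟨kp, hkp⟩
            = ∑ k' : Fin (P.sE ((j : ℕ) + 1)), GEntry P lam j (k' : ℕ) kp • v k' :=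
          keyv ⟨kp, hkp⟩
        have hvkp : v ⟨kp, hkp⟩ ∈ V := ih kp (Nat.lt_succ_self kp) hkp
        set K1 : Fin (P.sE ((j : ℕ) + 1)) := ⟨kp + 1, hkv⟩ with hK1
        have hK1v : (K1 : ℕ) = kp + 1 := rfl
        have hG1 : GEntry P lam j (K1 : ℕ) kp = 1 := by
          rw [hK1v]; exact S4.G_subdiag lam j hkv
        have hsub2 : ∑ k' : Fin (P.sE ((j : ℕ) + 1)),
            (if k' = K1 then 0 else GEntry P lam j (k' : ℕ) kp) • v k' ∈ V := by
          refine Submodule.sum_mem _ fun k' _ => ?_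
          by_cases he : k' = K1
          · rw [if_pos he, zero_smul]; exact Submodule.zero_mem _
          · rw [if_neg he]
            rcases lt_trichotomy (k' : ℕ) (kp + 1) with h | h | h
            · exact Submodule.smul_mem _ _ (ih (k' : ℕ) (by omega) k'.isLt)
            · exact absurd (Fin.ext (show (k' : ℕ) = (K1 : ℕ) from h)) he
            · rw [S4.G_upper lam j k'.isLt h, zero_smul]; exact Submodule.zero_mem _
        have hfin : (∑ k' : Fin (P.sE ((j : ℕ) + 1)), GEntry P lam j (k' : ℕ) kp • v k')
            - (∑ k' : Fin (P.sE ((j : ℕ) + 1)),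
                (if k' = K1 then 0 else GEntry P lam j (k' : ℕ) kp) • v k')
            = v K1 := by
          rw [← Finset.sum_sub_distrib]
          have hterm : ∀ k' : Fin (P.sE ((j : ℕ) + 1)),
              GEntry P lam j (k' : ℕ) kp • v k'
                - (if k' = K1 then 0 else GEntry P lam j (k' : ℕ) kp) • v k'
              = (if k' = K1 then v K1 else 0) := by
            intro k'
            by_cases he : k' = K1
            · rw [if_pos he, if_pos he, zero_smul, sub_zero, he, hG1, one_smul]
            · rw [if_neg he, if_neg he, sub_self]
          rw [Finset.sum_congr rfl fun k' _ => hterm k',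
            Finset.sum_ite_eq' Finset.univ K1 (fun _ => v K1),
            if_pos (Finset.mem_univ _)]
        have hmem : v K1 ∈ V := by
          rw [← hfin, ← hAv]
          exact Submodule.sub_mem _ (hVinv _ hvkp) hsub2
        exact hmem
  have hWinv : ∀ x ∈ Submodule.span ℂ (Set.range v),
      A *ᵥ x ∈ Submodule.span ℂ (Set.range v) := by
    intro x hx
    induction hx using Submodule.span_induction with
    | mem y hy =>
      obtain ⟨k, rfl⟩ := hy
      rw [keyv k]
      exact Submodule.sum_mem _ fun k' _ =>
        Submodule.smul_mem _ _ (Submodule.subset_span ⟨k', rfl⟩)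
    | zero => rw [Matrix.mulVec_zero]; exact Submodule.zero_mem _
    | add a b _ _ ha hb => rw [Matrix.mulVec_add]; exact Submodule.add_mem _ ha hb
    | smul c a _ ha => rw [Matrix.mulVec_smul]; exact Submodule.smul_mem _ _ ha
  have hWV : Submodule.span ℂ (Set.range v) = V := by
    apply le_antisymm
    · exact Submodule.span_le.mpr (by rintro x ⟨k, rfl⟩; exact hvV (k : ℕ) k.isLt)
    · refine Submodule.span_le.mpr ?_
      rintro x ⟨p, rfl⟩
      induction p with
      | zero =>
        show A ^ 0 *ᵥ Pi.single i 1 ∈ _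
        rw [pow_zero, Matrix.one_mulVec, ← hv0 hN0]
        exact Submodule.subset_span ⟨_, rfl⟩
      | succ p ihp =>
        show A ^ (p + 1) *ᵥ Pi.single i 1 ∈ _
        rw [pow_succ', ← Matrix.mulVec_mulVec]
        exact hWinv _ ihp
  have hli : LinearIndependent ℂ v := by
    have hcomp := (Pi.basisFun ℂ (Fin n)).linearIndependent.comp f hfinj
    have he : (⇑(Pi.basisFun ℂ (Fin n)) ∘ f) = v := by
      funext k
      simp [v, Function.comp, Pi.basisFun_apply]
    rwa [he] at hcomp
  let bV : Module.Basis (Fin (P.sE ((j : ℕ) + 1))) ℂ V :=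
    (Module.Basis.span hli).map (LinearEquiv.ofEq _ _ hWV)
  have hbV : ∀ k, (bV k : Fin n → ℂ) = v k := by
    intro k
    simp only [bV, Module.Basis.map_apply, LinearEquiv.coe_ofEq_apply, Module.Basis.span_apply]
  have hinv : ∀ x ∈ V, A.mulVecLin x ∈ V := by
    intro x hx; rw [Matrix.mulVecLin_apply]; exact hVinv x hx
  refine ⟨hinv, bV, fun k => ⟨f k, hbV k⟩, ?_⟩
  ext r c
  rw [LinearMap.toMatrix_apply]
  have hgc : (A.mulVecLin.restrict hinv) (bV c)
      = ∑ k' : Fin (P.sE ((j : ℕ) + 1)), GEntry P lam j (k' : ℕ) (c : ℕ) • bV k' := by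
    apply Subtype.coe_injective
    show ((A.mulVecLin.restrict hinv) (bV c) : Fin n → ℂ)
        = ((∑ k' : Fin (P.sE ((j : ℕ) + 1)),
            GEntry P lam j (k' : ℕ) (c : ℕ) • bV k' : V) : Fin n → ℂ)
    rw [LinearMap.restrict_coe_apply, Matrix.mulVecLin_apply, hbV, keyv,
      Submodule.coe_sum]
    refine Finset.sum_congr rfl fun k' _ => ?_
    rw [SetLike.val_smul, hbV]
  rw [hgc]
  have hr := congrFun (bV.repr_sum_self fun k' => GEntry P lam j (k' : ℕ) (c : ℕ)) r
  rw [hr]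
  rfl
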